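/- (Linear convergence of simplified Newton iteration) Let I be a strong interval approximate zero of a polynomial system F : ℂⁿ → ℂⁿ with matrix Y, and let x* ∈ I be the unique zero of F in I. For any x₀ ∈ I define x_{i+1} = x_i − Y·F(x_i). Then all x_i remain in I and ‖x* − x_{i+1}‖_∞ ≤ c·‖x* − x_i‖_∞ where c = √2·‖1ₙ − Y·□JF(I)‖_∞ < 1; in particular x_i → x*. -/

import Mathlib

open Set Pointwise

noncomputable section

/-- Pointwise addition of sets of reals. -/
def sadd (X Y : Set ℝ) : Set ℝ := Set.image2 (· + ·) X Y

/-- Pointwise subtraction of sets of reals. -/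
def ssub (X Y : Set ℝ) : Set ℝ := Set.image2 (· - ·) X Y

/-- Pointwise multiplication of sets of reals. -/
def smul' (X Y : Set ℝ) : Set ℝ := Set.image2 (· * ·) X Y

/-- The rectangular complex interval `X + iY`. -/
def cI (X Y : Set ℝ) : Set ℂ := {z | z.re ∈ X ∧ z.im ∈ Y}

/-- Real parts of a set of complex numbers. -/
def reS (S : Set ℂ) : Set ℝ := Complex.re '' S

/-- Imaginary parts of a set of complex numbers. -/
def imS (S : Set ℂ) : Set ℝ := Complex.im '' S

/-- Complex interval multiplication:
`(X+iY)·(W+iZ) = (X·W − Y·Z) + i(X·Z + Y·W)`. -/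
def cmul (S T : Set ℂ) : Set ℂ :=
  cI (ssub (smul' (reS S) (reS T)) (smul' (imS S) (imS T)))
     (sadd (smul' (reS S) (imS T)) (smul' (imS S) (reS T)))

/-- `S` is a rectangular complex interval. -/
def IsRect (S : Set ℂ) : Prop :=
  ∃ a b c d : ℝ, a ≤ b ∧ c ≤ d ∧ S = cI (Set.Icc a b) (Set.Icc c d)

variable {n : ℕ}

/-- The interval vector `I ∈ 𝕀ℂⁿ` determined by coordinate intervals `IV`. -/
def boxSet (IV : Fin n → Set ℂ) : Set (Fin n → ℂ) := {z | ∀ j, z j ∈ IV j}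

/-- `F` is a square polynomial system. -/
def IsPolyMap (F : (Fin n → ℂ) → Fin n → ℂ) : Prop :=
  ∀ i, ∃ p : MvPolynomial (Fin n) ℂ, ∀ z, F z i = MvPolynomial.eval z p

/-- The Jacobian matrix `JF(z)` of `F` at `z`. -/
def jac (F : (Fin n → ℂ) → Fin n → ℂ) (z : Fin n → ℂ) : Matrix (Fin n) (Fin n) ℂ :=
  fun i j => fderiv ℂ (fun w => F w i) z (Pi.single j 1)

/-- Entries of the interval matrix `1ₙ − Y·□JF(I)`, where `MJ` is the interval
enclosure of the Jacobian on `I`, computed in complex interval arithmetic. -/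
def Bmat (Y : Matrix (Fin n) (Fin n) ℂ) (MJ : Fin n → Fin n → Set ℂ) :
    Fin n → Fin n → Set ℂ :=
  fun i j => ({(if i = j then (1 : ℂ) else 0)} : Set ℂ) - ∑ k, cmul {Y i k} (MJ k j)

/-- Coordinates of the Krawczyk set
`K_{x,Y}(I) = x − Y·□F(x) + (1ₙ − Y·□JF(I))(I − x)`, where `FX` is the interval
enclosure `□F(x)` and `MJ` the interval enclosure `□JF(I)`. -/
def Kset (x : Fin n → ℂ) (Y : Matrix (Fin n) (Fin n) ℂ)
    (FX : Fin n → Set ℂ) (MJ : Fin n → Fin n → Set ℂ) (IV : Fin n → Set ℂ) :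
    Fin n → Set ℂ :=
  fun i => (({x i} : Set ℂ) - ∑ j, cmul {Y i j} (FX j)) +
      ∑ j, cmul ((IV j) - {x j}) (Bmat Y MJ i j)

/-- The `∞`-operator norm of a complex matrix (`Fin n → ℂ` carries the max norm). -/
def opNormInf (M : Matrix (Fin n) (Fin n) ℂ) : ℝ :=
  sSup {r | ∃ v : Fin n → ℂ, ‖v‖ = 1 ∧ r = ‖M.mulVec v‖}

/-- The norm `‖A‖_∞` of an interval matrix: the maximum of the `∞`-operator norms
over all matrices contained in it. -/
def imatNorm (B : Fin n → Fin n → Set ℂ) : ℝ :=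
  sSup {r | ∃ M : Matrix (Fin n) (Fin n) ℂ, (∀ i j, M i j ∈ B i j) ∧ r = opNormInf M}

lemma mem_cmul {S T : Set ℂ} {a b : ℂ} (ha : a ∈ S) (hb : b ∈ T) : a * b ∈ cmul S T := by
  refine ⟨⟨_, ⟨a.re, ⟨a, ha, rfl⟩, b.re, ⟨b, hb, rfl⟩, rfl⟩, _,
      ⟨a.im, ⟨a, ha, rfl⟩, b.im, ⟨b, hb, rfl⟩, rfl⟩, rfl⟩,
    ⟨_, ⟨a.re, ⟨a, ha, rfl⟩, b.im, ⟨b, hb, rfl⟩, rfl⟩, _,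
      ⟨a.im, ⟨a, ha, rfl⟩, b.re, ⟨b, hb, rfl⟩, rfl⟩, ?_⟩⟩
  simp [Complex.mul_im]

lemma sum_set_mem {α : Type*} [DecidableEq α] (s : Finset α) (f : α → ℂ) (S : α → Set ℂ)
    (h : ∀ j ∈ s, f j ∈ S j) : ∑ j ∈ s, f j ∈ ∑ j ∈ s, S j := by
  induction s using Finset.induction with
  | empty => simp
  | insert _ _ hx ih =>
    rw [Finset.sum_insert hx, Finset.sum_insert hx]
    exact Set.add_mem_add (h _ (Finset.mem_insert_self _ _))
      (ih fun j hj => h j (Finset.mem_insert_of_mem hj))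

lemma rect_nonempty {S : Set ℂ} (h : IsRect S) : S.Nonempty := by
  obtain ⟨a, b, c, d, hab, hcd, rfl⟩ := h
  exact ⟨⟨a, c⟩, ⟨by simpa using hab, by simpa using hcd⟩⟩

lemma rect_convex_mem {S : Set ℂ} (h : IsRect S) {z w : ℂ} (hz : z ∈ S) (hw : w ∈ S)
    {t : ℝ} (ht0 : 0 ≤ t) (ht1 : t ≤ 1) : z + (t : ℂ) * (w - z) ∈ S := by
  obtain ⟨a, b, c, d, hab, hcd, rfl⟩ := h
  obtain ⟨⟨h1, h2⟩, h3, h4⟩ := hz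
  obtain ⟨⟨h5, h6⟩, h7, h8⟩ := hw
  constructor
  · simp only [Complex.add_re, Complex.mul_re, Complex.ofReal_re, Complex.ofReal_im,
      Complex.sub_re, Complex.sub_im, Set.mem_Icc]
    constructor <;> nlinarith
  · simp only [Complex.add_im, Complex.mul_im, Complex.ofReal_re, Complex.ofReal_im,
      Complex.sub_re, Complex.sub_im, Set.mem_Icc]
    constructor <;> nlinarith

lemma rect_integral_mem {S : Set ℂ} (h : IsRect S) {f : ℝ → ℂ} (hf : Continuous f)
    (hmem : ∀ t ∈ Set.Icc (0:ℝ) 1, f t ∈ S) : (∫ t in (0:ℝ)..1, f t) ∈ S := by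
  obtain ⟨a, b, c, d, hab, hcd, rfl⟩ := h
  have hint : IntervalIntegrable f MeasureTheory.volume 0 1 := hf.intervalIntegrable 0 1
  have hre : (∫ t in (0:ℝ)..1, f t).re = ∫ t in (0:ℝ)..1, (f t).re := by
    simpa using (Complex.reCLM.intervalIntegral_comp_comm hint).symm
  have him : (∫ t in (0:ℝ)..1, f t).im = ∫ t in (0:ℝ)..1, (f t).im := by
    simpa using (Complex.imCLM.intervalIntegral_comp_comm hint).symm
  have hintre : IntervalIntegrable (fun t => (f t).re) MeasureTheory.volume 0 1 :=
    (Complex.continuous_re.comp hf).intervalIntegrable 0 1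
  have hintim : IntervalIntegrable (fun t => (f t).im) MeasureTheory.volume 0 1 :=
    (Complex.continuous_im.comp hf).intervalIntegrable 0 1
  have h01 : (0:ℝ) ≤ 1 := zero_le_one
  constructor
  · rw [hre]
    constructor
    · have := intervalIntegral.integral_mono_on h01 (intervalIntegrable_const (c := a)) hintre
        (fun t ht => (hmem t ht).1.1)
      simpa using this
    · have := intervalIntegral.integral_mono_on h01 hintre (intervalIntegrable_const (c := b))
        (fun t ht => (hmem t ht).1.2)
      simpa using this
  · rw [him]
    constructor
    · have := intervalIntegral.integral_mono_on h01 (intervalIntegrable_const (c := c)) hintim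
        (fun t ht => (hmem t ht).2.1)
      simpa using this
    · have := intervalIntegral.integral_mono_on h01 hintim (intervalIntegrable_const (c := d))
        (fun t ht => (hmem t ht).2.2)
      simpa using this

lemma bnd_rect {S : Set ℂ} (h : IsRect S) : ∃ C, 0 ≤ C ∧ ∀ z ∈ S, ‖z‖ ≤ C := by
  obtain ⟨a, b, c, d, hab, hcd, rfl⟩ := h
  refine ⟨|a| + |b| + |c| + |d|, by positivity, fun z hz => ?_⟩
  obtain ⟨⟨h1, h2⟩, h3, h4⟩ := hz
  have := Complex.norm_le_abs_re_add_abs_im z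
  have h5 : |z.re| ≤ |a| + |b| := abs_le.2 (by
    constructor <;> (cases abs_cases a <;> cases abs_cases b <;> linarith))
  have h6 : |z.im| ≤ |c| + |d| := abs_le.2 (by
    constructor <;> (cases abs_cases c <;> cases abs_cases d <;> linarith))
  calc ‖z‖ ≤ |z.re| + |z.im| := this
    _ ≤ _ := by linarith

lemma bnd_cmul {S T : Set ℂ} {C D : ℝ} (hC : 0 ≤ C) (hD : 0 ≤ D)
    (hS : ∀ z ∈ S, ‖z‖ ≤ C) (hT : ∀ z ∈ T, ‖z‖ ≤ D) :
    ∀ z ∈ cmul S T, ‖z‖ ≤ 4 * C * D := by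
  have key : ∀ (pr : ℝ → ℝ) (qr : ℝ → ℝ), (∀ w : ℂ, |pr w.re| ≤ ‖w‖) →
      True → True := fun _ _ _ _ => trivial
  rintro z ⟨hre, him⟩
  have hb : ∀ x ∈ smul' (reS S) (reS T), |x| ≤ C * D := by
    rintro x ⟨u, ⟨s, hs, rfl⟩, v, ⟨t, ht, rfl⟩, rfl⟩
    rw [abs_mul]
    exact mul_le_mul ((Complex.abs_re_le_norm s).trans (hS s hs))
      ((Complex.abs_re_le_norm t).trans (hT t ht)) (abs_nonneg _) hC
  have hb2 : ∀ x ∈ smul' (imS S) (imS T), |x| ≤ C * D := by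
    rintro x ⟨u, ⟨s, hs, rfl⟩, v, ⟨t, ht, rfl⟩, rfl⟩
    rw [abs_mul]
    exact mul_le_mul ((Complex.abs_im_le_norm s).trans (hS s hs))
      ((Complex.abs_im_le_norm t).trans (hT t ht)) (abs_nonneg _) hC
  have hb3 : ∀ x ∈ smul' (reS S) (imS T), |x| ≤ C * D := by
    rintro x ⟨u, ⟨s, hs, rfl⟩, v, ⟨t, ht, rfl⟩, rfl⟩
    rw [abs_mul]
    exact mul_le_mul ((Complex.abs_re_le_norm s).trans (hS s hs))
      ((Complex.abs_im_le_norm t).trans (hT t ht)) (abs_nonneg _) hC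
  have hb4 : ∀ x ∈ smul' (imS S) (reS T), |x| ≤ C * D := by
    rintro x ⟨u, ⟨s, hs, rfl⟩, v, ⟨t, ht, rfl⟩, rfl⟩
    rw [abs_mul]
    exact mul_le_mul ((Complex.abs_im_le_norm s).trans (hS s hs))
      ((Complex.abs_re_le_norm t).trans (hT t ht)) (abs_nonneg _) hC
  have h1 : |z.re| ≤ 2 * (C * D) := by
    obtain ⟨u, hu, v, hv, huv⟩ := hre
    have := hb u hu; have := hb2 v hv
    rw [← huv]; cases abs_cases (u - v) <;> cases abs_cases u <;> cases abs_cases v <;> linarith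
  have h2 : |z.im| ≤ 2 * (C * D) := by
    obtain ⟨u, hu, v, hv, huv⟩ := him
    have := hb3 u hu; have := hb4 v hv
    rw [← huv]; cases abs_cases (u + v) <;> cases abs_cases u <;> cases abs_cases v <;> linarith
  calc ‖z‖ ≤ |z.re| + |z.im| := Complex.norm_le_abs_re_add_abs_im z
    _ ≤ 4 * C * D := by linarith

lemma bnd_ssum {α : Type*} [DecidableEq α] (s : Finset α) (S : α → Set ℂ) (C : α → ℝ)
    (h : ∀ k ∈ s, ∀ z ∈ S k, ‖z‖ ≤ C k) : ∀ z ∈ ∑ k ∈ s, S k, ‖z‖ ≤ ∑ k ∈ s, C k := by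
  induction s using Finset.induction with
  | empty => intro z hz; simp only [Finset.sum_empty] at hz ⊢
             rw [Set.mem_zero.mp hz]; simp
  | insert _ _ hx ih =>
    intro z hz
    rw [Finset.sum_insert hx] at hz
    obtain ⟨u, hu, v, hv, rfl⟩ := hz
    rw [Finset.sum_insert hx]
    exact (norm_add_le u v).trans (add_le_add (h _ (Finset.mem_insert_self _ _) u hu)
      (ih (fun k hk => h k (Finset.mem_insert_of_mem hk)) v hv))

open MvPolynomial in

lemma eval_differentiable (p : MvPolynomial (Fin n) ℂ) :
    Differentiable ℂ (fun w : Fin n → ℂ => eval w p) := by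
  induction p using MvPolynomial.induction_on with
  | C a => simpa using differentiable_const (eval (0 : Fin n → ℂ) (C a))
  | add p q hp hq => simpa [eval_add] using hp.fun_add hq
  | mul_X p i hp =>
    have : (fun w : Fin n → ℂ => eval w (p * X i)) = fun w => eval w p * w i := by
      funext w; simp
    rw [this]
    exact hp.mul (differentiable_pi.mp differentiable_id i)

open MvPolynomial in

lemma eval_line_hasDerivAt (p : MvPolynomial (Fin n) ℂ) (a d : Fin n → ℂ) (t : ℝ) :
    HasDerivAt (fun s : ℝ => eval (a + s • d) p)
      (∑ j, eval (a + t • d) (pderiv j p) * d j) t := by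
  induction p using MvPolynomial.induction_on with
  | C c => simpa using hasDerivAt_const t (eval (0 : Fin n → ℂ) (C c))
  | add p q hp hq =>
    have := hp.fun_add hq
    simpa [eval_add, Finset.sum_add_distrib, add_mul] using this
  | mul_X p i hp =>
    have hline : HasDerivAt (fun s : ℝ => (a + s • d) i) (d i) t := by
      have h1 : HasDerivAt (fun s : ℝ => s • d i) ((1:ℝ) • d i) t :=
        (hasDerivAt_id t).smul_const (d i)
      have h2 := (hasDerivAt_const t (a i)).fun_add h1
      simpa using h2
    have hmul := hp.fun_mul hline
    have heq : (fun s : ℝ => eval (a + s • d) p * (a + s • d) i)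
        = fun s : ℝ => eval (a + s • d) (p * X i) := by
      funext s; simp
    rw [heq] at hmul
    refine hmul.congr_deriv ?_
    symm
    have : ∀ j, eval (a + t • d) (pderiv j (p * X i)) * d j
        = eval (a + t • d) (pderiv j p) * d j * (a + t • d) i
          + eval (a + t • d) p * (if j = i then d j else 0) := by
      intro j
      rw [pderiv_mul, eval_add, eval_mul, eval_mul, pderiv_X]
      by_cases h : j = i <;> simp [h, Pi.single_apply] <;> ring
    rw [Finset.sum_congr rfl (fun j _ => this j), Finset.sum_add_distrib]
    simp [Finset.sum_ite_eq', ← Finset.sum_mul]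

open MvPolynomial in

lemma jac_eq {F : (Fin n → ℂ) → Fin n → ℂ} {i : Fin n} {p : MvPolynomial (Fin n) ℂ}
    (hFi : ∀ z, F z i = eval z p) (z : Fin n → ℂ) (j : Fin n) :
    jac F z i j = eval z (pderiv j p) := by
  have hfun : (fun w : Fin n → ℂ => F w i) = fun w => eval w p := funext hFi
  set d : Fin n → ℂ := Pi.single j 1 with hd
  have hline : HasDerivAt (fun s : ℝ => z + s • d) d 0 := by
    have h1 : HasDerivAt (fun s : ℝ => s • d) ((1:ℝ) • d) 0 := (hasDerivAt_id 0).smul_const d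
    simpa using h1
  have hz0 : z + (0:ℝ) • d = z := by simp
  have hF' : HasFDerivAt (fun w => eval w p) (fderiv ℂ (fun w => eval w p) z) ((fun s : ℝ => z + s • d) 0) := by
    rw [show (fun s : ℝ => z + s • d) 0 = z by simp]
    exact (eval_differentiable p z).hasFDerivAt
  have hcomp := (hF'.restrictScalars ℝ).comp_hasDerivAt 0 hline
  have hl := eval_line_hasDerivAt p z d 0
  rw [hz0] at hl
  have huniq := hcomp.unique hl
  have huniq' : fderiv ℂ (fun w => eval w p) z d = ∑ k, eval z (pderiv k p) * d k := huniq
  have : fderiv ℂ (fun w => eval w p) z d = eval z (pderiv j p) := by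
    rw [huniq', hd]
    simp [Pi.single_apply, Finset.sum_ite_eq']
  rw [jac, hfun, ← hd, this]

open MvPolynomial in

lemma jac_continuous {F : (Fin n → ℂ) → Fin n → ℂ} {i : Fin n} {p : MvPolynomial (Fin n) ℂ}
    (hFi : ∀ z, F z i = eval z p) (j : Fin n) :
    Continuous (fun z : Fin n → ℂ => jac F z i j) := by
  have : (fun z : Fin n → ℂ => jac F z i j) = fun z => eval z (pderiv j p) :=
    funext fun z => jac_eq hFi z j
  rw [this]
  exact MvPolynomial.continuous_eval (p := MvPolynomial.pderiv j p)

open MvPolynomial in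

lemma line_continuous (a d : Fin n → ℂ) : Continuous (fun s : ℝ => a + s • d) :=
  continuous_const.add (continuous_id.smul continuous_const)

open MvPolynomial in

lemma mvt_integral {F : (Fin n → ℂ) → Fin n → ℂ} (hF : IsPolyMap F) (a b : Fin n → ℂ)
    (i : Fin n) :
    F b i - F a i
      = ∑ j, (∫ t in (0:ℝ)..1, jac F (a + t • (b - a)) i j) * (b j - a j) := by
  obtain ⟨p, hp⟩ := hF i
  have hcontj : ∀ j : Fin n, Continuous (fun t : ℝ => jac F (a + t • (b - a)) i j) :=
    fun j => (jac_continuous hp j).comp (line_continuous a (b - a))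
  have hg' : ∀ t : ℝ, HasDerivAt (fun s : ℝ => eval (a + s • (b - a)) p)
      (∑ j, jac F (a + t • (b - a)) i j * (b j - a j)) t := by
    intro t
    have := eval_line_hasDerivAt p a (b - a) t
    convert this using 2 with j
    rw [jac_eq hp]
    simp
  have hcont : Continuous (fun t : ℝ => ∑ j, jac F (a + t • (b - a)) i j * (b j - a j)) :=
    continuous_finset_sum _ (fun j _ => (hcontj j).mul continuous_const)
  have hftc := intervalIntegral.integral_eq_sub_of_hasDerivAt
    (f := fun s : ℝ => eval (a + s • (b - a)) p)
    (fun t _ => hg' t) (hcont.intervalIntegrable 0 1)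
  have hsplit : (∫ t in (0:ℝ)..1, ∑ j, jac F (a + t • (b - a)) i j * (b j - a j))
      = ∑ j, (∫ t in (0:ℝ)..1, jac F (a + t • (b - a)) i j) * (b j - a j) := by
    rw [intervalIntegral.integral_finset_sum
      (fun j _ => ((hcontj j).fun_mul continuous_const).intervalIntegrable 0 1)]
    exact Finset.sum_congr rfl fun j _ => intervalIntegral.integral_mul_const _ _
  rw [← hsplit, hftc]
  have h1 : a + (1:ℝ) • (b - a) = b := by simp
  have h0 : a + (0:ℝ) • (b - a) = a := by simp
  rw [h1, h0, hp, hp]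

lemma mem_Bmat {Y : Matrix (Fin n) (Fin n) ℂ} {MJ : Fin n → Fin n → Set ℂ}
    {M : Matrix (Fin n) (Fin n) ℂ} (hM : ∀ k j, M k j ∈ MJ k j) (i j : Fin n) :
    (if i = j then (1:ℂ) else 0) - ∑ k, Y i k * M k j ∈ Bmat Y MJ i j :=
  Set.sub_mem_sub rfl (sum_set_mem _ _ _ fun k _ => mem_cmul rfl (hM k j))

lemma opNormInf_nonneg (M : Matrix (Fin n) (Fin n) ℂ) : 0 ≤ opNormInf M :=
  Real.sSup_nonneg (by rintro r ⟨v, hv, rfl⟩; exact norm_nonneg _)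

lemma opNormInf_le {M : Matrix (Fin n) (Fin n) ℂ} {C : ℝ} (hC : 0 ≤ C)
    (h : ∀ i j, ‖M i j‖ ≤ C) : opNormInf M ≤ n * C := by
  apply Real.sSup_le _ (by positivity)
  rintro r ⟨v, hv, rfl⟩
  rw [pi_norm_le_iff_of_nonneg (by positivity)]
  intro i
  calc ‖∑ j, M i j * v j‖ ≤ ∑ j : Fin n, ‖M i j * v j‖ := norm_sum_le _ _
    _ ≤ ∑ _j : Fin n, C := Finset.sum_le_sum fun j _ => by
        rw [norm_mul]
        calc ‖M i j‖ * ‖v j‖ ≤ C * 1 :=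
          mul_le_mul (h i j) ((norm_le_pi_norm v j).trans hv.le) (norm_nonneg _) hC
        _ = C := mul_one C
    _ = n * C := by simp [mul_comm]

lemma mulVec_norm_le {M : Matrix (Fin n) (Fin n) ℂ} {C : ℝ} (hC : 0 ≤ C)
    (h : ∀ i j, ‖M i j‖ ≤ C) (v : Fin n → ℂ) : ‖M.mulVec v‖ ≤ n * C * ‖v‖ := by
  rw [pi_norm_le_iff_of_nonneg (by positivity)]
  intro i
  calc ‖∑ j, M i j * v j‖ ≤ ∑ j : Fin n, ‖M i j * v j‖ := norm_sum_le _ _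
    _ ≤ ∑ _j : Fin n, C * ‖v‖ := Finset.sum_le_sum fun j _ => by
        rw [norm_mul]
        exact mul_le_mul (h i j) (norm_le_pi_norm v j) (norm_nonneg _) hC
    _ = n * C * ‖v‖ := by simp [Finset.sum_const]; ring

lemma opNormInf_bddAbove {M : Matrix (Fin n) (Fin n) ℂ} {C : ℝ} (hC : 0 ≤ C)
    (h : ∀ i j, ‖M i j‖ ≤ C) :
    BddAbove {r | ∃ v : Fin n → ℂ, ‖v‖ = 1 ∧ r = ‖M.mulVec v‖} := by
  refine ⟨n * C, ?_⟩
  rintro r ⟨v, hv, rfl⟩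
  simpa [hv] using mulVec_norm_le hC h v

lemma opNormInf_mulVec_le {M : Matrix (Fin n) (Fin n) ℂ} {C : ℝ} (hC : 0 ≤ C)
    (h : ∀ i j, ‖M i j‖ ≤ C) (v : Fin n → ℂ) :
    ‖M.mulVec v‖ ≤ opNormInf M * ‖v‖ := by
  rcases eq_or_ne v 0 with rfl | hv
  · simp [Matrix.mulVec_zero, opNormInf_nonneg M]
  · have hv' : (0:ℝ) < ‖v‖ := norm_pos_iff.mpr hv
    set u : Fin n → ℂ := ((‖v‖ : ℂ))⁻¹ • v with hu
    have hnu : ‖u‖ = 1 := by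
      rw [hu, norm_smul]
      simp [norm_inv, hv'.ne']
    have hvu : v = (‖v‖ : ℂ) • u := by
      rw [hu, smul_smul]
      rw [mul_inv_cancel₀ (by exact_mod_cast hv'.ne')]
      simp
    have hMu : ‖M.mulVec u‖ ≤ opNormInf M :=
      le_csSup (opNormInf_bddAbove hC h) ⟨u, hnu, rfl⟩
    have h1 : M.mulVec v = (‖v‖ : ℂ) • M.mulVec u := by
      rw [← Matrix.mulVec_smul, ← hvu]
    rw [h1, norm_smul, mul_comm]
    simp only [Complex.norm_real, Real.norm_eq_abs, abs_of_pos hv']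
    exact mul_le_mul_of_nonneg_right hMu hv'.le

lemma bmat_bound (Y : Matrix (Fin n) (Fin n) ℂ) {MJ : Fin n → Fin n → Set ℂ}
    (hMJr : ∀ i j, IsRect (MJ i j)) :
    ∃ C, 0 ≤ C ∧ ∀ i j, ∀ z ∈ Bmat Y MJ i j, ‖z‖ ≤ C := by
  have h := fun (k j : Fin n) => bnd_rect (hMJr k j)
  choose CM hCM0 hCMb using h
  set Cb : Fin n → Fin n → ℝ := fun i j => 1 + ∑ k, 4 * ‖Y i k‖ * CM k j with hCb
  have hCb0 : ∀ i j, 0 ≤ Cb i j := by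
    intro i j
    have : 0 ≤ ∑ k, 4 * ‖Y i k‖ * CM k j :=
      Finset.sum_nonneg fun k _ => mul_nonneg (by positivity) (hCM0 k j)
    simp only [hCb]; linarith
  refine ⟨∑ i, ∑ j, Cb i j, Finset.sum_nonneg fun i _ => Finset.sum_nonneg fun j _ => hCb0 i j,
    fun i j z hz => ?_⟩
  have hzb : ‖z‖ ≤ Cb i j := by
    obtain ⟨a, ha, b, hb, rfl⟩ := hz
    rw [Set.mem_singleton_iff] at ha
    have hbnorm : ‖b‖ ≤ ∑ k, 4 * ‖Y i k‖ * CM k j := by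
      refine bnd_ssum Finset.univ _ _ (fun k _ => ?_) b hb
      refine bnd_cmul (norm_nonneg _) (hCM0 k j) ?_ (hCMb k j) 
      rintro w hw
      rw [Set.mem_singleton_iff] at hw
      rw [hw]
    have hanorm : ‖a‖ ≤ 1 := by rw [ha]; split <;> simp
    calc ‖a - b‖ ≤ ‖a‖ + ‖b‖ := norm_sub_le _ _
      _ ≤ Cb i j := by simp only [hCb]; linarith
  calc ‖z‖ ≤ Cb i j := hzb
    _ ≤ ∑ j', Cb i j' := Finset.single_le_sum (fun j' _ => hCb0 i j') (Finset.mem_univ j)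
    _ ≤ ∑ i', ∑ j', Cb i' j' := Finset.single_le_sum
        (fun i' _ => Finset.sum_nonneg fun j' _ => hCb0 i' j') (Finset.mem_univ i)

lemma le_imatNorm {B : Fin n → Fin n → Set ℂ} {C : ℝ} (hC : 0 ≤ C)
    (hbnd : ∀ i j, ∀ z ∈ B i j, ‖z‖ ≤ C)
    {M : Matrix (Fin n) (Fin n) ℂ} (hM : ∀ i j, M i j ∈ B i j) :
    opNormInf M ≤ imatNorm B := by
  have hmem : opNormInf M ∈ {r | ∃ M' : Matrix (Fin n) (Fin n) ℂ,
      (∀ i j, M' i j ∈ B i j) ∧ r = opNormInf M'} := ⟨M, hM, rfl⟩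
  refine le_csSup ⟨n * C, ?_⟩ hmem
  rintro r ⟨M', hM', rfl⟩
  exact opNormInf_le hC (fun i j => hbnd i j _ (hM' i j))

lemma box_line_mem {IV : Fin n → Set ℂ} (hIV : ∀ j, IsRect (IV j)) {a b : Fin n → ℂ}
    (ha : a ∈ boxSet IV) (hb : b ∈ boxSet IV) {t : ℝ} (ht : t ∈ Set.Icc (0:ℝ) 1) :
    a + t • (b - a) ∈ boxSet IV := by
  intro j
  have : (a + t • (b - a)) j = a j + (t : ℂ) * (b j - a j) := by
    simp [Complex.real_smul]
  rw [this]
  exact rect_convex_mem (hIV j) (ha j) (hb j) ht.1 ht.2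

lemma mvt_mem {F : (Fin n → ℂ) → Fin n → ℂ} (hF : IsPolyMap F)
    {IV : Fin n → Set ℂ} (hIV : ∀ j, IsRect (IV j))
    {MJ : Fin n → Fin n → Set ℂ} (hMJr : ∀ i j, IsRect (MJ i j))
    (hMJ : ∀ z ∈ boxSet IV, ∀ i j, jac F z i j ∈ MJ i j)
    {a b : Fin n → ℂ} (ha : a ∈ boxSet IV) (hb : b ∈ boxSet IV) :
    ∃ M : Matrix (Fin n) (Fin n) ℂ, (∀ i j, M i j ∈ MJ i j) ∧
      ∀ i, F b i - F a i = ∑ j, M i j * (b j - a j) := by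
  refine ⟨fun i j => ∫ t in (0:ℝ)..1, jac F (a + t • (b - a)) i j, fun i j => ?_,
    fun i => mvt_integral hF a b i⟩
  obtain ⟨p, hp⟩ := hF i
  exact rect_integral_mem (hMJr i j)
    ((jac_continuous hp j).comp (line_continuous a (b - a)))
    (fun t ht => hMJ _ (box_line_mem hIV ha hb ht) i j)

lemma newton_algebra (Y M : Matrix (Fin n) (Fin n) ℂ) (Fx Fz x z : Fin n → ℂ)
    (hFz : ∀ k, Fz k = Fx k + ∑ j, M k j * (z j - x j)) (i : Fin n) :
    z i - ∑ j, Y i j * Fz j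
      = (x i - ∑ j, Y i j * Fx j)
        + ∑ j, (z j - x j) * ((if i = j then (1:ℂ) else 0) - ∑ k, Y i k * M k j) := by
  have h1 : ∑ j, Y i j * Fz j
      = (∑ j, Y i j * Fx j) + ∑ j, ∑ k, Y i j * (M j k * (z k - x k)) := by
    rw [← Finset.sum_add_distrib]
    exact Finset.sum_congr rfl fun j _ => by rw [hFz j, mul_add, Finset.mul_sum]
  have h2 : ∑ j, (z j - x j) * ((if i = j then (1:ℂ) else 0) - ∑ k, Y i k * M k j)
      = (z i - x i) - ∑ j, ∑ k, (z j - x j) * (Y i k * M k j) := by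
    simp only [mul_sub, Finset.sum_sub_distrib, mul_ite, mul_one, mul_zero, Finset.mul_sum]
    congr 1
    simp [Finset.sum_ite_eq, Finset.mem_univ]
  have h3 : ∑ j, ∑ k, Y i j * (M j k * (z k - x k))
      = ∑ j, ∑ k, (z j - x j) * (Y i k * M k j) := by
    rw [Finset.sum_comm]
    exact Finset.sum_congr rfl fun j _ => Finset.sum_congr rfl fun k _ => by ring
  rw [h1, h2, h3]
  ring

lemma newton_step_mem {F : (Fin n → ℂ) → Fin n → ℂ} (hF : IsPolyMap F)
    {IV : Fin n → Set ℂ} (hIV : ∀ j, IsRect (IV j))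
    {x : Fin n → ℂ} (hx : x ∈ boxSet IV)
    {Y : Matrix (Fin n) (Fin n) ℂ}
    {FX : Fin n → Set ℂ} (hFX : ∀ j, F x j ∈ FX j)
    {MJ : Fin n → Fin n → Set ℂ} (hMJr : ∀ i j, IsRect (MJ i j))
    (hMJ : ∀ z ∈ boxSet IV, ∀ i j, jac F z i j ∈ MJ i j)
    (hK : ∀ i, Kset x Y FX MJ IV i ⊆ IV i)
    {z : Fin n → ℂ} (hz : z ∈ boxSet IV) :
    z - Y.mulVec (F z) ∈ boxSet IV := by
  obtain ⟨M, hMmem, hMeq⟩ := mvt_mem hF hIV hMJr hMJ hx hz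
  intro i
  apply hK i
  have hFz : ∀ k, F z k = F x k + ∑ j, M k j * (z j - x j) := by
    intro k
    have h := hMeq k
    rw [← h]; ring
  have hval : (z - Y.mulVec (F z)) i
      = (x i - ∑ j, Y i j * F x j) + ∑ j, (z j - x j) * ((if i = j then (1:ℂ) else 0)
          - ∑ k, Y i k * M k j) := by
    have : (z - Y.mulVec (F z)) i = z i - ∑ j, Y i j * F z j := by
      simp [Matrix.mulVec, dotProduct]
    rw [this, newton_algebra Y M (F x) (F z) x z hFz i]
  rw [hval]
  refine Set.add_mem_add (Set.sub_mem_sub rfl (sum_set_mem _ _ _ fun j _ => mem_cmul rfl (hFX j)))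
    (sum_set_mem _ _ _ fun j _ => mem_cmul (Set.sub_mem_sub (hz j) rfl) (mem_Bmat hMmem i j))

lemma newton_error {F : (Fin n → ℂ) → Fin n → ℂ} (hF : IsPolyMap F)
    {IV : Fin n → Set ℂ} (hIV : ∀ j, IsRect (IV j))
    {MJ : Fin n → Fin n → Set ℂ} (hMJr : ∀ i j, IsRect (MJ i j))
    (hMJ : ∀ z ∈ boxSet IV, ∀ i j, jac F z i j ∈ MJ i j)
    (Y : Matrix (Fin n) (Fin n) ℂ)
    {z xstar : Fin n → ℂ} (hz : z ∈ boxSet IV) (hxstar : xstar ∈ boxSet IV)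
    (hzero : F xstar = 0) :
    ∃ M : Matrix (Fin n) (Fin n) ℂ, (∀ i j, M i j ∈ MJ i j) ∧
      xstar - (z - Y.mulVec (F z)) = (1 - Y * M).mulVec (xstar - z) := by
  obtain ⟨M, hMmem, hMeq⟩ := mvt_mem hF hIV hMJr hMJ hxstar hz
  refine ⟨M, hMmem, ?_⟩
  funext i
  have hFz : ∀ k, F z k = F xstar k + ∑ j, M k j * (z j - xstar j) := by
    intro k; rw [← hMeq k]; ring
  have halg := newton_algebra Y M (F xstar) (F z) xstar z hFz i
  have hz0 : ∀ j, F xstar j = 0 := fun j => by rw [hzero]; rfl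
  simp only [hz0, mul_zero, Finset.sum_const_zero, sub_zero] at halg
  have hLHS : (xstar - (z - Y.mulVec (F z))) i = xstar i - (z i - ∑ j, Y i j * F z j) := by
    simp [Matrix.mulVec, dotProduct]
  have hRHS : ((1 - Y * M).mulVec (xstar - z)) i
      = ∑ j, ((if i = j then (1:ℂ) else 0) - ∑ k, Y i k * M k j) * (xstar j - z j) := by
    simp [Matrix.mulVec, dotProduct, Matrix.sub_apply, Matrix.one_apply,
      Matrix.mul_apply, Finset.sum_mul]
  have hflip : ∑ j, ((if i = j then (1:ℂ) else 0) - ∑ k, Y i k * M k j) * (xstar j - z j)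
      = -∑ j, (z j - xstar j) * ((if i = j then (1:ℂ) else 0) - ∑ k, Y i k * M k j) := by
    rw [← Finset.sum_neg_distrib]
    exact Finset.sum_congr rfl fun j _ => by ring
  rw [hLHS, hRHS, hflip]
  linear_combination -halg

theorem simplified_newton_linear_convergence
    (F : (Fin n → ℂ) → Fin n → ℂ) (hF : IsPolyMap F)
    (IV : Fin n → Set ℂ) (hIV : ∀ j, IsRect (IV j))
    (x : Fin n → ℂ) (hx : x ∈ boxSet IV)
    (Y : Matrix (Fin n) (Fin n) ℂ) (hY : IsUnit Y)
    (FX : Fin n → Set ℂ) (hFXr : ∀ j, IsRect (FX j)) (hFX : ∀ j, F x j ∈ FX j)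
    (MJ : Fin n → Fin n → Set ℂ) (hMJr : ∀ i j, IsRect (MJ i j))
    (hMJ : ∀ z ∈ boxSet IV, ∀ i j, jac F z i j ∈ MJ i j)
    (hK : ∀ i, Kset x Y FX MJ IV i ⊆ IV i)
    (hnorm : Real.sqrt 2 * imatNorm (Bmat Y MJ) < 1)
    (xstar : Fin n → ℂ) (hstar : xstar ∈ boxSet IV ∧ F xstar = 0)
    (x₀ : Fin n → ℂ) (hx₀ : x₀ ∈ boxSet IV)
    (xs : ℕ → Fin n → ℂ) (hxs0 : xs 0 = x₀)
    (hxs : ∀ i, xs (i + 1) = xs i - Y.mulVec (F (xs i))) :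
    (∀ i, xs i ∈ boxSet IV) ∧
    (∀ i, ‖xstar - xs (i + 1)‖ ≤
        (Real.sqrt 2 * imatNorm (Bmat Y MJ)) * ‖xstar - xs i‖) ∧
    Filter.Tendsto xs Filter.atTop (nhds xstar) := by
  obtain ⟨Cb, hCb0, hCbb⟩ := bmat_bound Y hMJr
  set c : ℝ := Real.sqrt 2 * imatNorm (Bmat Y MJ) with hc
  have hmem : ∀ i, xs i ∈ boxSet IV := by
    intro i
    induction i with
    | zero => rw [hxs0]; exact hx₀
    | succ i ih => rw [hxs i]; exact newton_step_mem hF hIV hx hFX hMJr hMJ hK ih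
  have hsqrt2 : (1:ℝ) ≤ Real.sqrt 2 := by
    rw [show (1:ℝ) = Real.sqrt 1 by simp]
    exact Real.sqrt_le_sqrt (by norm_num)
  have hcontr : ∀ i, ‖xstar - xs (i+1)‖ ≤ c * ‖xstar - xs i‖ := by
    intro i
    obtain ⟨M, hMmem, hMeq⟩ := newton_error hF hIV hMJr hMJ Y (hmem i) hstar.1 hstar.2
    rw [hxs i, hMeq]
    have hBm : ∀ i' j, (1 - Y * M) i' j ∈ Bmat Y MJ i' j := by
      intro i' j
      have h1 : (1 - Y * M) i' j
          = (if i' = j then (1:ℂ) else 0) - ∑ k, Y i' k * M k j := by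
        simp [Matrix.sub_apply, Matrix.one_apply, Matrix.mul_apply]
      rw [h1]
      exact mem_Bmat hMmem i' j
    have hent : ∀ i' j, ‖(1 - Y * M) i' j‖ ≤ Cb := fun i' j => hCbb i' j _ (hBm i' j)
    have hop := le_imatNorm hCb0 hCbb hBm
    have him0 : 0 ≤ imatNorm (Bmat Y MJ) := le_trans (opNormInf_nonneg _) hop
    calc ‖(1 - Y * M).mulVec (xstar - xs i)‖
        ≤ opNormInf (1 - Y * M) * ‖xstar - xs i‖ := opNormInf_mulVec_le hCb0 hent _
      _ ≤ imatNorm (Bmat Y MJ) * ‖xstar - xs i‖ :=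
          mul_le_mul_of_nonneg_right hop (norm_nonneg _)
      _ ≤ c * ‖xstar - xs i‖ :=
          mul_le_mul_of_nonneg_right (le_mul_of_one_le_left him0 hsqrt2) (norm_nonneg _)
  refine ⟨hmem, hcontr, ?_⟩
  set c' : ℝ := max c 0 with hc'
  have hc'0 : 0 ≤ c' := le_max_right _ _
  have hc'1 : c' < 1 := max_lt hnorm one_pos
  have hgeom : ∀ i, ‖xstar - xs i‖ ≤ c' ^ i * ‖xstar - xs 0‖ := by
    intro i
    induction i with
    | zero => simp
    | succ i ih =>
      calc ‖xstar - xs (i+1)‖ ≤ c * ‖xstar - xs i‖ := hcontr i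
        _ ≤ c' * ‖xstar - xs i‖ :=
            mul_le_mul_of_nonneg_right (le_max_left _ _) (norm_nonneg _)
        _ ≤ c' * (c' ^ i * ‖xstar - xs 0‖) := mul_le_mul_of_nonneg_left ih hc'0
        _ = c' ^ (i+1) * ‖xstar - xs 0‖ := by rw [pow_succ]; ring
  have hb : Filter.Tendsto (fun i => c' ^ i * ‖xstar - xs 0‖) Filter.atTop (nhds 0) := by
    have h := tendsto_pow_atTop_nhds_zero_of_lt_one hc'0 hc'1
    simpa using h.mul_const ‖xstar - xs 0‖
  have hdist : Filter.Tendsto (fun i => dist (xs i) xstar) Filter.atTop (nhds 0) := by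
    apply squeeze_zero (fun i => dist_nonneg) _ hb
    intro i
    rw [dist_eq_norm, ← norm_neg]
    simpa using hgeom i
  exact tendsto_iff_dist_tendsto_zero.mpr hdist
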